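/- Let α_1 < ... < α_n be reals, n ≥ 2, γ ∈ (0,1). The minimum over bipartitions (S, S̄) (with v_1 ∈ S, v_n ∈ S̄) of range(S) + γ·range(S̄) is equal to the minimum over p ∈ {1,...,n-1} of (α_p - α_1) + γ(α_n - α_{p+1}). -/

import Mathlib

open Finset

noncomputable def rng {n : ℕ} (α : Fin n → ℝ) (S : Finset (Fin n)) : ℝ :=
  if h : S.Nonempty then S.sup' h α - S.inf' h α else 0

lemma fin_mk_le {n a : ℕ} {h : a < n} {i : Fin n} : (⟨a, h⟩ : Fin n) ≤ i ↔ a ≤ i.val :=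
  Iff.rfl

lemma fin_le_mk {n a : ℕ} {h : a < n} {i : Fin n} : i ≤ (⟨a, h⟩ : Fin n) ↔ i.val ≤ a :=
  Iff.rfl

lemma fin_mk_lt {n a : ℕ} {h : a < n} {i : Fin n} : (⟨a, h⟩ : Fin n) < i ↔ a < i.val :=
  Iff.rfl

lemma fin_lt_mk {n a : ℕ} {h : a < n} {i : Fin n} : i < (⟨a, h⟩ : Fin n) ↔ i.val < a :=
  Iff.rfl

lemma fin_val_mk' {n a : ℕ} (h : a < n) : ((⟨a, h⟩ : Fin n) : ℕ) = a := rfl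

lemma rng_eq {n : ℕ} (α : Fin n → ℝ) (hα : Monotone α) (S : Finset (Fin n))
    (h : S.Nonempty) : rng α S = α (S.max' h) - α (S.min' h) := by
  unfold rng
  rw [dif_pos h]
  congr 1
  · exact le_antisymm (Finset.sup'_le _ _ fun i hi => hα (S.le_max' i hi))
      (Finset.le_sup' α (S.max'_mem h))
  · exact le_antisymm (Finset.inf'_le α (S.min'_mem h))
      (Finset.le_inf' _ _ fun i hi => hα (S.min'_le i hi))

lemma rng_Iic {n : ℕ} (α : Fin n → ℝ) (hα : Monotone α) (p : ℕ) (hp : p + 1 < n) :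
    rng α (Finset.Iic (⟨p, Nat.lt_of_succ_lt hp⟩ : Fin n)) =
      α ⟨p, Nat.lt_of_succ_lt hp⟩ - α ⟨0, Nat.zero_lt_of_lt hp⟩ := by
  have h1 : (Finset.Iic (⟨p, by omega⟩ : Fin n)).Nonempty := ⟨_, Finset.mem_Iic.mpr le_rfl⟩
  rw [rng_eq α hα _ h1]
  congr 2
  · refine le_antisymm (Finset.max'_le _ _ _ fun i hi => Finset.mem_Iic.mp hi) ?_
    exact Finset.le_max' _ _ (Finset.mem_Iic.mpr le_rfl)
  · refine le_antisymm (Finset.min'_le _ _ (Finset.mem_Iic.mpr (by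
      rw [Fin.mk_le_mk]; omega))) ?_
    exact Finset.le_min' _ _ _ fun i _ => by rw [fin_mk_le]; omega
lemma rng_Ioi {n : ℕ} (α : Fin n → ℝ) (hα : Monotone α) (p : ℕ) (hp : p + 1 < n) :
    rng α (Finset.Ioi (⟨p, Nat.lt_of_succ_lt hp⟩ : Fin n)) =
      α ⟨n - 1, Nat.sub_lt (Nat.zero_lt_of_lt hp) Nat.one_pos⟩ - α ⟨p + 1, hp⟩ := by
  have hmem : (⟨p + 1, hp⟩ : Fin n) ∈ Finset.Ioi (⟨p, by omega⟩ : Fin n) :=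
    Finset.mem_Ioi.mpr (by rw [Fin.mk_lt_mk]; omega)
  have h2 : (Finset.Ioi (⟨p, by omega⟩ : Fin n)).Nonempty := ⟨_, hmem⟩
  rw [rng_eq α hα _ h2]
  congr 2
  · refine le_antisymm (Finset.max'_le _ _ _ fun i _ => by
      rw [fin_le_mk]; have := i.isLt; omega) ?_
    exact Finset.le_max' _ _ (Finset.mem_Ioi.mpr (by rw [Fin.mk_lt_mk]; omega))
  · refine le_antisymm (Finset.min'_le _ _ hmem) ?_
    refine Finset.le_min' _ _ _ fun i hi => ?_
    rw [Finset.mem_Ioi, fin_mk_lt] at hi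
    rw [fin_mk_le]
    omega

/-- The minimum of the weighted range sum `range(S) + γ·range(S̄)` over bipartitions
with `v₁ ∈ S` and `vₙ ∈ S̄` equals the minimum over split points `p` of
`(α_p - α_1) + γ(α_n - α_{p+1})` (indices 0-based here). -/
theorem stmt4 (n : ℕ) (hn : 2 ≤ n) (α : Fin n → ℝ) (hα : StrictMono α)
    (γ : ℝ) (hγ : 0 < γ) (hγ1 : γ < 1) :
    sInf {x : ℝ | ∃ S : Finset (Fin n), (⟨0, by omega⟩ : Fin n) ∈ S ∧
        (⟨n - 1, by omega⟩ : Fin n) ∈ Sᶜ ∧ x = rng α S + γ * rng α Sᶜ} =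
    sInf {x : ℝ | ∃ p : ℕ, ∃ hp : p + 1 < n,
        x = (α ⟨p, by omega⟩ - α ⟨0, by omega⟩) +
          γ * (α ⟨n - 1, by omega⟩ - α ⟨p + 1, hp⟩)} := by
  have hmono := hα.monotone
  have hcompl : ∀ p : ℕ, ∀ h : p < n,
      (Finset.Iic (⟨p, h⟩ : Fin n))ᶜ = Finset.Ioi (⟨p, h⟩ : Fin n) := by
    intro p h
    ext i
    simp [not_le]
  have bddL : BddBelow {x : ℝ | ∃ S : Finset (Fin n), (⟨0, by omega⟩ : Fin n) ∈ S ∧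
      (⟨n - 1, by omega⟩ : Fin n) ∈ Sᶜ ∧ x = rng α S + γ * rng α Sᶜ} := by
    refine ⟨0, ?_⟩
    rintro x ⟨S, h0, hLc, rfl⟩
    have h1 : S.Nonempty := ⟨_, h0⟩
    have h2 : Sᶜ.Nonempty := ⟨_, hLc⟩
    have r1 : 0 ≤ rng α S := by
      rw [rng_eq α hmono _ h1]
      have := hmono (S.min'_le _ (S.max'_mem h1))
      linarith
    have r2 : 0 ≤ rng α Sᶜ := by
      rw [rng_eq α hmono _ h2]
      have := hmono (Sᶜ.min'_le _ (Sᶜ.max'_mem h2))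
      linarith
    positivity
  have bddR : BddBelow {x : ℝ | ∃ p : ℕ, ∃ hp : p + 1 < n,
      x = (α ⟨p, by omega⟩ - α ⟨0, by omega⟩) +
        γ * (α ⟨n - 1, by omega⟩ - α ⟨p + 1, hp⟩)} := by
    refine ⟨0, ?_⟩
    rintro x ⟨p, hp, rfl⟩
    have h1 : α (⟨0, by omega⟩ : Fin n) ≤ α ⟨p, by omega⟩ :=
      hmono (by rw [fin_mk_le]; omega)
    have h2 : α (⟨p + 1, hp⟩ : Fin n) ≤ α ⟨n - 1, by omega⟩ :=
      hmono (by rw [fin_le_mk]; omega)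
    nlinarith
  apply le_antisymm
  · have hRne : {x : ℝ | ∃ p : ℕ, ∃ hp : p + 1 < n,
        x = (α ⟨p, by omega⟩ - α ⟨0, by omega⟩) +
          γ * (α ⟨n - 1, by omega⟩ - α ⟨p + 1, hp⟩)}.Nonempty := by
      exact ⟨(α ⟨0, by omega⟩ - α ⟨0, by omega⟩) +
        γ * (α ⟨n - 1, by omega⟩ - α ⟨0 + 1, by omega⟩), 0, by omega, rfl⟩
    apply csInf_le_csInf bddL hRne
    rintro x ⟨p, hp, rfl⟩
    refine ⟨Finset.Iic ⟨p, by omega⟩, Finset.mem_Iic.mpr (by rw [Fin.mk_le_mk]; omega),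
      ?_, ?_⟩
    · rw [hcompl p (by omega)]
      exact Finset.mem_Ioi.mpr (by rw [Fin.mk_lt_mk]; omega)
    · rw [hcompl p (by omega), rng_Iic α hmono p hp, rng_Ioi α hmono p hp]
  · have hLne : {x : ℝ | ∃ S : Finset (Fin n), (⟨0, by omega⟩ : Fin n) ∈ S ∧
        (⟨n - 1, by omega⟩ : Fin n) ∈ Sᶜ ∧ x = rng α S + γ * rng α Sᶜ}.Nonempty := by
      refine ⟨_, Finset.Iic (⟨0, by omega⟩ : Fin n),
        Finset.mem_Iic.mpr le_rfl, ?_, rfl⟩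
      rw [hcompl 0 (by omega)]
      exact Finset.mem_Ioi.mpr (by rw [Fin.mk_lt_mk]; omega)
    refine le_csInf hLne ?_
    rintro x ⟨S, h0, hLc, rfl⟩
    have h1 : S.Nonempty := ⟨_, h0⟩
    have h2 : Sᶜ.Nonempty := ⟨_, hLc⟩
    have hm1 : 1 ≤ (Sᶜ.min' h2).val := by
      by_contra hc
      push_neg at hc
      have hmz : Sᶜ.min' h2 = (⟨0, by omega⟩ : Fin n) := Fin.ext (by simp only [fin_val_mk']; omega)
      have := Sᶜ.min'_mem h2
      rw [hmz, Finset.mem_compl] at this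
      exact this h0
    have hmM : (Sᶜ.min' h2).val ≤ (S.max' h1).val + 1 := by
      by_contra hc
      push_neg at hc
      have hjn : (S.max' h1).val + 1 < n := lt_of_lt_of_le hc (Nat.le_of_lt_succ
        (Nat.lt_succ_of_lt (Sᶜ.min' h2).isLt))
      have hj : (⟨(S.max' h1).val + 1, hjn⟩ : Fin n) ∈ Sᶜ := by
        rw [Finset.mem_compl]
        intro hmem
        have := S.le_max' _ hmem
        rw [fin_mk_le] at this
        omega
      have := Sᶜ.min'_le _ hj
      rw [fin_le_mk] at this
      omega
    have hp : ((Sᶜ.min' h2).val - 1) + 1 < n := by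
      have := (Sᶜ.min' h2).isLt
      omega
    have hminS : S.min' h1 = (⟨0, by omega⟩ : Fin n) :=
      le_antisymm (S.min'_le _ h0) (by rw [fin_mk_le]; omega)
    have hmaxC : Sᶜ.max' h2 = (⟨n - 1, by omega⟩ : Fin n) := by
      refine le_antisymm ?_ (Sᶜ.le_max' _ hLc)
      rw [fin_le_mk]
      have := (Sᶜ.max' h2).isLt
      omega
    refine csInf_le_of_le bddR ⟨(Sᶜ.min' h2).val - 1, hp, rfl⟩ ?_
    rw [rng_eq α hmono _ h1, rng_eq α hmono _ h2, hminS, hmaxC]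
    have hmm : (⟨((Sᶜ.min' h2).val - 1) + 1, hp⟩ : Fin n) = Sᶜ.min' h2 :=
      Fin.ext (by simp only [fin_val_mk']; omega)
    rw [hmm]
    have hle : α (⟨(Sᶜ.min' h2).val - 1, by omega⟩ : Fin n) ≤ α (S.max' h1) :=
      hmono (by rw [fin_mk_le]; omega)
    linarith
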